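/- Variance kernel without singularities: with L_A, L_B, Δ(z₁,z₂), ω_A, ω_B, m_fc as in the two-point setting, whenever z₁ ≠ z₂, m_fc(z₁) ≠ m_fc(z₂) and Δ(z₁,z₂) ≠ 0, one has log[((ω_A(z₁) − ω_A(z₂))(ω_B(z₁) − ω_B(z₂)))/((z₁ − z₂)(F_fc(z₁) − F_fc(z₂)))] = −log Δ(z₁,z₂), where F_fc(z) = −1/m_fc(z), up to an integer multiple of 2πi; in particular the ratio inside the first logarithm equals 1/Δ(z₁,z₂). -/

import Mathlib

/-- The two-point sum `L(z₁,z₂) = (1/N) Σ_j [(c_j − ω(z₁))(c_j − ω(z₂))]⁻¹`. -/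
noncomputable def twoPointSum {N : ℕ} (c : Fin N → ℝ) (ω : ℂ → ℂ) (z₁ z₂ : ℂ) : ℂ :=
  (1 / (N : ℂ)) * ∑ j : Fin N, (((c j : ℂ) - ω z₁) * ((c j : ℂ) - ω z₂))⁻¹

/-- The two-point Jacobian `Δ(z₁,z₂) = 1 − (L_A/(m₁m₂) − 1)(L_B/(m₁m₂) − 1)`. -/
noncomputable def twoPointJacobian {N : ℕ} (a b : Fin N → ℝ) (ωA ωB mfc : ℂ → ℂ)
    (z₁ z₂ : ℂ) : ℂ :=
  1 - (twoPointSum b ωA z₁ z₂ / (mfc z₁ * mfc z₂) - 1) *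
      (twoPointSum a ωB z₁ z₂ / (mfc z₁ * mfc z₂) - 1)

lemma sub_omega_ne {c : ℝ} {w : ℂ} (hw : 0 < w.im) : (c : ℂ) - w ≠ 0 := by
  intro h
  have : ((c : ℂ) - w).im = 0 := by rw [h]; simp
  simp [Complex.sub_im] at this
  linarith

lemma diff_rep {N : ℕ} (c : Fin N → ℝ) (ω mfc : ℂ → ℂ) (z₁ z₂ : ℂ)
    (h1 : 0 < (ω z₁).im) (h2 : 0 < (ω z₂).im)
    (hr1 : mfc z₁ = (1 / (N : ℂ)) * ∑ j : Fin N, ((c j : ℂ) - ω z₁)⁻¹)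
    (hr2 : mfc z₂ = (1 / (N : ℂ)) * ∑ j : Fin N, ((c j : ℂ) - ω z₂)⁻¹) :
    mfc z₁ - mfc z₂ = (ω z₁ - ω z₂) * twoPointSum c ω z₁ z₂ := by
  have key : ∀ j : Fin N, ((c j : ℂ) - ω z₁)⁻¹ - ((c j : ℂ) - ω z₂)⁻¹
      = (ω z₁ - ω z₂) * (((c j : ℂ) - ω z₁) * ((c j : ℂ) - ω z₂))⁻¹ := by
    intro j
    have hA := sub_omega_ne (c := c j) h1
    have hB := sub_omega_ne (c := c j) h2
    field_simp
    ring
  rw [hr1, hr2, twoPointSum, ← mul_sub, ← Finset.sum_sub_distrib]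
  simp only [key]
  rw [← Finset.mul_sum]
  ring

/-- Variance kernel without singularities: whenever `z₁ ≠ z₂`, `m_fc(z₁) ≠ m_fc(z₂)`
and `Δ(z₁,z₂) ≠ 0`, the ratio
`((ω_A(z₁) − ω_A(z₂))(ω_B(z₁) − ω_B(z₂)))/((z₁ − z₂)(F_fc(z₁) − F_fc(z₂)))`
equals `1/Δ(z₁,z₂)` (where `F_fc = −1/m_fc`), and its logarithm equals
`−log Δ(z₁,z₂)` up to an integer multiple of `2πi`. -/
theorem variance_kernel_without_singularities {N : ℕ} (hN : 0 < N)
    (a b : Fin N → ℝ) (ωA ωB mfc : ℂ → ℂ) (z₁ z₂ : ℂ)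
    (hz₁ : 0 < z₁.im) (hz₂ : 0 < z₂.im) (hzz : z₁ ≠ z₂)
    (hmapA : ∀ z : ℂ, 0 < z.im → 0 < (ωA z).im)
    (hmapB : ∀ z : ℂ, 0 < z.im → 0 < (ωB z).im)
    (hrepA : ∀ z : ℂ, 0 < z.im →
      mfc z = (1 / (N : ℂ)) * ∑ j : Fin N, ((b j : ℂ) - ωA z)⁻¹)
    (hrepB : ∀ z : ℂ, 0 < z.im →
      mfc z = (1 / (N : ℂ)) * ∑ j : Fin N, ((a j : ℂ) - ωB z)⁻¹)
    (hsub : ∀ z : ℂ, 0 < z.im → ωA z + ωB z - z = -(mfc z)⁻¹)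
    (hm₁ : mfc z₁ ≠ 0) (hm₂ : mfc z₂ ≠ 0) (hm : mfc z₁ ≠ mfc z₂)
    (hΔ : twoPointJacobian a b ωA ωB mfc z₁ z₂ ≠ 0) :
    ((ωA z₁ - ωA z₂) * (ωB z₁ - ωB z₂)) /
        ((z₁ - z₂) * (-(mfc z₁)⁻¹ - -(mfc z₂)⁻¹))
      = (twoPointJacobian a b ωA ωB mfc z₁ z₂)⁻¹ ∧
    ∃ k : ℤ,
      Complex.log (((ωA z₁ - ωA z₂) * (ωB z₁ - ωB z₂)) /
          ((z₁ - z₂) * (-(mfc z₁)⁻¹ - -(mfc z₂)⁻¹)))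
        = -Complex.log (twoPointJacobian a b ωA ωB mfc z₁ z₂)
          + 2 * Real.pi * Complex.I * (k : ℂ) := by
  have hδ : mfc z₁ - mfc z₂ ≠ 0 := sub_ne_zero.mpr hm
  have hdA : mfc z₁ - mfc z₂ = (ωA z₁ - ωA z₂) * twoPointSum b ωA z₁ z₂ :=
    diff_rep b ωA mfc z₁ z₂ (hmapA z₁ hz₁) (hmapA z₂ hz₂) (hrepA z₁ hz₁) (hrepA z₂ hz₂)
  have hdB : mfc z₁ - mfc z₂ = (ωB z₁ - ωB z₂) * twoPointSum a ωB z₁ z₂ :=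
    diff_rep a ωB mfc z₁ z₂ (hmapB z₁ hz₁) (hmapB z₂ hz₂) (hrepB z₁ hz₁) (hrepB z₂ hz₂)
  have hα : ωA z₁ - ωA z₂ ≠ 0 := by
    intro h; rw [hdA, h, zero_mul] at hδ; exact hδ rfl
  have hβ : ωB z₁ - ωB z₂ ≠ 0 := by
    intro h; rw [hdB, h, zero_mul] at hδ; exact hδ rfl
  have hLA : twoPointSum b ωA z₁ z₂ = (mfc z₁ - mfc z₂) / (ωA z₁ - ωA z₂) := by
    rw [eq_div_iff hα, hdA]; ring
  have hLB : twoPointSum a ωB z₁ z₂ = (mfc z₁ - mfc z₂) / (ωB z₁ - ωB z₂) := by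
    rw [eq_div_iff hβ, hdB]; ring
  have hzd : z₁ - z₂ ≠ 0 := sub_ne_zero.mpr hzz
  have hFeq : -(mfc z₁)⁻¹ - -(mfc z₂)⁻¹ = (mfc z₁ - mfc z₂) * ((mfc z₁) * (mfc z₂))⁻¹ := by
    field_simp
    ring
  have hF : -(mfc z₁)⁻¹ - -(mfc z₂)⁻¹ ≠ 0 := by
    rw [hFeq]
    exact mul_ne_zero hδ (inv_ne_zero (mul_ne_zero hm₁ hm₂))
  have e1 : z₁ - z₂ = (ωA z₁ - ωA z₂) + (ωB z₁ - ωB z₂)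
      - (-(mfc z₁)⁻¹ - -(mfc z₂)⁻¹) := by
    have h1 := hsub z₁ hz₁
    have h2 := hsub z₂ hz₂
    have : (ωA z₁ + ωB z₁ - z₁) - (ωA z₂ + ωB z₂ - z₂) = -(mfc z₁)⁻¹ - -(mfc z₂)⁻¹ := by
      rw [h1, h2]
    linear_combination -this
  have hmain : ((ωA z₁ - ωA z₂) * (ωB z₁ - ωB z₂)) /
        ((z₁ - z₂) * (-(mfc z₁)⁻¹ - -(mfc z₂)⁻¹))
      = (twoPointJacobian a b ωA ωB mfc z₁ z₂)⁻¹ := by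
    rw [← one_div (twoPointJacobian a b ωA ωB mfc z₁ z₂), div_eq_div_iff (mul_ne_zero hzd hF) hΔ]
    rw [twoPointJacobian, hLA, hLB, e1, hFeq]
    field_simp
    ring
  refine ⟨hmain, ?_⟩
  rw [hmain]
  by_cases harg : (twoPointJacobian a b ωA ωB mfc z₁ z₂).arg = Real.pi
  · refine ⟨1, ?_⟩
    have habs : ‖twoPointJacobian a b ωA ωB mfc z₁ z₂‖ ≠ 0 :=
      norm_ne_zero_iff.mpr hΔ
    rw [Complex.log, Complex.log, Complex.arg_inv, if_pos harg, norm_inv,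
      Real.log_inv, harg]
    push_cast
    ring
  · exact ⟨0, by rw [Complex.log_inv _ harg]; push_cast; ring⟩
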